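/- Let F be a finite field, K/F a quadratic field extension with nontrivial F-automorphism τ, U a finite-dimensional K-vector space, and h a nondegenerate τ-hermitian form on U. Then U has an orthonormal K-basis: a basis u₁,…,uₙ with h(uᵢ,uᵢ) = 1 and h(uᵢ,uⱼ) = 0 for i ≠ j. -/

import Mathlib

open Module

/-- In a finite field of cardinality `q ^ 2`, every nonzero `c` with `c ^ q = c`
is a "norm": `c = α * α ^ q` for some `α`. -/
lemma herm_norm_exists {K : Type*} [Field K] [Fintype K] (q : ℕ) (hq : 2 ≤ q)
    (hcardK : Fintype.card K = q ^ 2) (c : K) (hc : c ≠ 0) (hcq : c ^ q = c) :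
    ∃ α : K, α * α ^ q = c := by
  obtain ⟨g, hg⟩ := IsCyclic.exists_monoid_generator (α := Kˣ)
  have hz : ∀ x : Kˣ, x ∈ Subgroup.zpowers g := by
    intro x
    obtain ⟨k, hk⟩ := hg x
    exact ⟨k, by show g ^ (k : ℤ) = x; rw [zpow_natCast]; exact hk⟩
  classical
  have horder : orderOf g = q ^ 2 - 1 := by
    rw [orderOf_eq_card_of_forall_mem_zpowers hz, Nat.card_eq_fintype_card,
      Fintype.card_units, hcardK]
  obtain ⟨k, hk0⟩ := hg (Units.mk0 c hc)
  have hk : g ^ k = Units.mk0 c hc := hk0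
  have hc1 : c ^ (q - 1) = 1 := by
    have h1 : c ^ (q - 1) * c = c := by
      rw [← pow_succ, Nat.sub_add_cancel (by omega)]; exact hcq
    have h2 : c ^ (q - 1) * c = 1 * c := by rw [h1, one_mul]
    exact mul_right_cancel₀ hc h2
  have hk1 : g ^ (k * (q - 1)) = 1 := by
    rw [pow_mul, hk]
    ext
    rw [Units.val_pow_eq_pow_val, Units.val_mk0, hc1, Units.val_one]
  have hdvd : q ^ 2 - 1 ∣ k * (q - 1) := horder ▸ orderOf_dvd_of_pow_eq_one hk1
  have hfac : q ^ 2 - 1 = (q + 1) * (q - 1) := by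
    obtain ⟨r, rfl⟩ : ∃ r, q = r + 2 := ⟨q - 2, by omega⟩
    have h1 : (r + 2) ^ 2 = r * r + 4 * r + 4 := by ring
    have h2 : (r + 2 + 1) * (r + 2 - 1) = r * r + 4 * r + 3 := by
      rw [show r + 2 - 1 = r + 1 from rfl]; ring
    omega
  have hdvd2 : (q + 1) ∣ k := by
    rw [hfac] at hdvd
    exact (Nat.mul_dvd_mul_iff_right (show 0 < q - 1 by omega)).mp hdvd
  obtain ⟨m, rfl⟩ := hdvd2
  refine ⟨(g : K) ^ m, ?_⟩
  have hgval : ((g : K) ^ ((q + 1) * m)) = c := by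
    rw [← Units.val_pow_eq_pow_val, hk, Units.val_mk0]
  calc (g : K) ^ m * ((g : K) ^ m) ^ q = (g : K) ^ (m + m * q) := by
        rw [← pow_mul, ← pow_add]
    _ = (g : K) ^ ((q + 1) * m) := by rw [show m + m * q = (q + 1) * m by ring]
    _ = c := hgval

/-- The nontrivial automorphism of a quadratic extension of finite fields is
`x ↦ x ^ q` where `q = |F|`. -/
lemma herm_tau_pow (F K : Type*) [Field F] [Field K] [Fintype F] [Fintype K]
    [Algebra F K] (hdim : Module.finrank F K = 2)
    (τ : K ≃ₐ[F] K) (hτ : τ ≠ AlgEquiv.refl) :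
    ∀ x : K, τ x = x ^ Fintype.card F := by
  classical
  have hq2 : 2 ≤ Fintype.card F := Fintype.one_lt_card
  obtain ⟨p, hp⟩ := CharP.exists F
  haveI := hp
  haveI hpp : Fact p.Prime := ⟨CharP.char_is_prime F p⟩
  haveI : CharP K p := charP_of_injective_algebraMap (algebraMap F K).injective p
  obtain ⟨s, -, hcard⟩ := FiniteField.card F p
  have hcomm : ∀ a : F, iterateFrobenius K p (s : ℕ) (algebraMap F K a) = algebraMap F K a := by
    intro a
    rw [iterateFrobenius_def, ← map_pow, ← hcard, FiniteField.pow_card]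
  let m : K →ₐ[F] K := { (iterateFrobenius K p (s : ℕ)) with commutes' := hcomm }
  have hm : ∀ x : K, m x = x ^ Fintype.card F := by
    intro x
    rw [hcard]
    rfl
  have hmi : Function.Injective m := fun a b hab => by
    exact (iterateFrobenius K p (s : ℕ)).injective hab
  let φ : K ≃ₐ[F] K := AlgEquiv.ofBijective m (Finite.injective_iff_bijective.mp hmi)
  have hφ : ∀ x : K, φ x = x ^ Fintype.card F := hm
  have hcardK : Fintype.card K = Fintype.card F ^ 2 := by
    rw [card_eq_pow_finrank (K := F) (V := K), hdim]
  -- φ is not the identity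
  obtain ⟨g, hg⟩ := IsCyclic.exists_monoid_generator (α := Kˣ)
  have hz : ∀ x : Kˣ, x ∈ Subgroup.zpowers g := by
    intro x
    obtain ⟨k, hk⟩ := hg x
    exact ⟨k, by show g ^ (k : ℤ) = x; rw [zpow_natCast]; exact hk⟩
  have horder : orderOf g = Fintype.card F ^ 2 - 1 := by
    rw [orderOf_eq_card_of_forall_mem_zpowers hz, Nat.card_eq_fintype_card,
      Fintype.card_units, hcardK]
  have hφne : φ ≠ AlgEquiv.refl := by
    intro hcon
    have h1 : (g : K) ^ Fintype.card F = g := by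
      rw [← hφ, hcon]; rfl
    have hgq : g ^ Fintype.card F = g := by
      ext; rw [Units.val_pow_eq_pow_val]; exact h1
    have h2 : g ^ (Fintype.card F - 1) = 1 := by
      have h3 : g ^ (Fintype.card F - 1) * g = g := by
        rw [← pow_succ, Nat.sub_add_cancel (by omega)]; exact hgq
      have h4 : g ^ (Fintype.card F - 1) * g = 1 * g := by rw [h3, one_mul]
      exact mul_right_cancel h4
    have hdvd : Fintype.card F ^ 2 - 1 ∣ Fintype.card F - 1 :=
      horder ▸ orderOf_dvd_of_pow_eq_one h2
    have hle := Nat.le_of_dvd (by omega) hdvd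
    have hqq : Fintype.card F ^ 2 = Fintype.card F * Fintype.card F := sq (Fintype.card F)
    have h5 : 2 * Fintype.card F ≤ Fintype.card F * Fintype.card F :=
      Nat.mul_le_mul_right _ hq2
    omega
  have hcardAut : Fintype.card (K ≃ₐ[F] K) = 2 := by
    rw [← Nat.card_eq_fintype_card, IsGalois.card_aut_eq_finrank, hdim]
  have hτφ : τ = φ := by
    by_contra hne
    have h3 : ({AlgEquiv.refl, τ, φ} : Finset (K ≃ₐ[F] K)).card = 3 := by
      rw [Finset.card_insert_of_notMem (by simp [Ne.symm hτ, Ne.symm hφne]),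
        Finset.card_insert_of_notMem (by simp [hne]), Finset.card_singleton]
    have h4 := Finset.card_le_univ ({AlgEquiv.refl, τ, φ} : Finset (K ≃ₐ[F] K))
    rw [h3, hcardAut] at h4
    omega
  intro x
  rw [hτφ, hφ]

/-- Main induction: orthonormal families exist in every dimension. -/
lemma herm_aux (F K : Type*) [Field F] [Field K] [Algebra F K] (τ : K ≃ₐ[F] K)
    (hex : ∃ α : K, τ α ≠ α)
    (hnorm : ∀ c : K, c ≠ 0 → τ c = c → ∃ α : K, α * τ α = c) :
    ∀ (n : ℕ) (U : Type*) [AddCommGroup U] [Module K U] [FiniteDimensional K U]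
      (h : U → U → K),
      (∀ u v w : U, h (u + v) w = h u w + h v w) →
      (∀ (α : K) (u v : U), h (α • u) v = α * h u v) →
      (∀ u v : U, h v u = τ (h u v)) →
      (∀ u : U, (∀ v : U, h u v = 0) → u = 0) →
      Module.finrank K U = n →
      ∃ b : Fin n → U, ∀ i j, h (b i) (b j) = if i = j then 1 else 0 := by
  intro n
  induction n with
  | zero =>
    intro U _ _ _ h _ _ _ _ _
    exact ⟨Fin.elim0, fun i => i.elim0⟩
  | succ n IH =>
    intro U _ _ _ h hadd hsmul hherm hnd hrank
    classical
    have hadd2 : ∀ u v w : U, h u (v + w) = h u v + h u w := by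
      intro u v w
      rw [hherm (v + w) u, hadd, map_add, ← hherm, ← hherm]
    have hsmul2 : ∀ (α : K) (u v : U), h u (α • v) = τ α * h u v := by
      intro α u v
      rw [hherm (α • v) u, hsmul, map_mul, ← hherm]
    haveI : Nontrivial U := Module.finrank_pos_iff.mp (by rw [hrank]; exact n.succ_pos)
    -- Step 1: a vector with nonzero "norm"
    have hex1 : ∃ u : U, h u u ≠ 0 := by
      by_contra hall
      push_neg at hall
      obtain ⟨u₀, hu₀⟩ := exists_ne (0 : U)
      apply hu₀
      apply hnd
      intro v
      obtain ⟨α, hα⟩ := hex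
      have hA := hall (u₀ + v)
      rw [hadd, hadd2, hadd2, hall u₀, hall v, hherm u₀ v, zero_add, add_zero] at hA
      have hB := hall (α • u₀ + v)
      rw [hadd, hadd2, hadd2, hsmul α u₀ (α • u₀), hsmul α u₀ v, hsmul2 α u₀ u₀,
        hsmul2 α v u₀, hall u₀, hall v, hherm u₀ v] at hB
      have key : (α - τ α) * h u₀ v = 0 := by linear_combination hB - τ α * hA
      rcases mul_eq_zero.mp key with h1 | h1
      · exact absurd (by linear_combination -h1 : τ α = α) hα
      · exact h1
    obtain ⟨u, hu⟩ := hex1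
    have hcfix : τ (h u u) = h u u := (hherm u u).symm
    obtain ⟨α, hα⟩ := hnorm (h u u)⁻¹ (inv_ne_zero hu) (by rw [map_inv₀, hcfix])
    set e := α • u with he
    have hee : h e e = 1 := by
      rw [he, hsmul, hsmul2, ← mul_assoc, hα, inv_mul_cancel₀ hu]
    -- Step 2: split off the orthogonal complement of e
    let φ : U →ₗ[K] K :=
      { toFun := fun v => h v e
        map_add' := fun v w => hadd v w e
        map_smul' := fun a v => hsmul a v e }
    have hφe : φ e = 1 := hee
    have hrange : LinearMap.range φ = ⊤ := by
      rw [LinearMap.range_eq_top]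
      intro c
      exact ⟨c • e, by rw [map_smul, hφe, smul_eq_mul, mul_one]⟩
    set W := LinearMap.ker φ with hW
    have hWrank : finrank K W = n := by
      have hrn := LinearMap.finrank_range_add_finrank_ker φ
      rw [hrange, finrank_top, finrank_self, hrank, ← hW] at hrn
      omega
    -- properties of restricted form
    have hdecomp : ∀ v : U, v - φ v • e ∈ W := by
      intro v
      rw [hW, LinearMap.mem_ker, map_sub, map_smul, hφe, smul_eq_mul, mul_one, sub_self]
    have hwe : ∀ w : W, h (w : U) e = 0 := fun w => w.2
    obtain ⟨b', hb'⟩ := IH W (fun w w' => h w w')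
      (fun u v w => by push_cast; exact hadd _ _ _)
      (fun a u v => by push_cast; exact hsmul _ _ _)
      (fun u v => hherm _ _)
      (by
        intro w hw
        have hcw : (w : U) = 0 := by
          apply hnd
          intro v
          have h1 : h (w : U) v = h (w : U) (φ v • e) + h (w : U) (v - φ v • e) := by
            rw [← hadd2, add_sub_cancel]
          rw [h1, hsmul2, hwe w, mul_zero, zero_add]
          exact hw ⟨v - φ v • e, hdecomp v⟩
        exact Subtype.ext hcw)
      hWrank
    refine ⟨Fin.cons e (fun i => (b' i : U)), ?_⟩
    intro i j
    induction i using Fin.cases with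
    | zero =>
      induction j using Fin.cases with
      | zero => simpa using hee
      | succ j =>
        rw [Fin.cons_zero, Fin.cons_succ, if_neg (Fin.succ_ne_zero j).symm]
        rw [hherm, hwe (b' j), map_zero]
    | succ i =>
      induction j using Fin.cases with
      | zero =>
        rw [Fin.cons_succ, Fin.cons_zero, if_neg (Fin.succ_ne_zero i)]
        exact hwe (b' i)
      | succ j =>
        rw [Fin.cons_succ, Fin.cons_succ]
        simpa [Fin.succ_inj] using hb' i j

/-- Let `F` be a finite field, `K/F` a quadratic field extension with nontrivial
`F`-automorphism `τ`, `U` a finite-dimensional `K`-vector space, and `h` a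
nondegenerate `τ`-hermitian form on `U`.  Then `U` has an orthonormal basis. -/
theorem hermitian_orthonormal_basis
    (F K : Type*) [Field F] [Field K] [Fintype F] [Fintype K]
    [Algebra F K] (hdim : Module.finrank F K = 2)
    (τ : K ≃ₐ[F] K) (hτ : τ ≠ AlgEquiv.refl)
    (U : Type*) [AddCommGroup U] [Module K U] [FiniteDimensional K U]
    (h : U → U → K)
    (hadd : ∀ u v w : U, h (u + v) w = h u w + h v w)
    (hsmul : ∀ (α : K) (u v : U), h (α • u) v = α * h u v)
    (hherm : ∀ u v : U, h v u = τ (h u v))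
    (hnd : ∀ u : U, (∀ v : U, h u v = 0) → u = 0) :
    ∃ b : Basis (Fin (Module.finrank K U)) K U,
      ∀ i j, h (b i) (b j) = if i = j then 1 else 0 := by
  classical
  have htp := herm_tau_pow F K hdim τ hτ
  have hq2 : 2 ≤ Fintype.card F := Fintype.one_lt_card
  have hcardK : Fintype.card K = Fintype.card F ^ 2 := by
    rw [card_eq_pow_finrank (K := F) (V := K), hdim]
  have hex : ∃ α : K, τ α ≠ α := by
    by_contra hc
    push_neg at hc
    exact hτ (AlgEquiv.ext hc)
  have hnorm : ∀ c : K, c ≠ 0 → τ c = c → ∃ α : K, α * τ α = c := by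
    intro c hc hfix
    rw [htp] at hfix
    obtain ⟨α, hα⟩ := herm_norm_exists (Fintype.card F) hq2 hcardK c hc hfix
    exact ⟨α, by rw [htp]; exact hα⟩
  obtain ⟨b, hb⟩ := herm_aux F K τ hex hnorm (finrank K U) U h hadd hsmul hherm hnd rfl
  have li : LinearIndependent K b := by
    rw [Fintype.linearIndependent_iff]
    intro g hg j
    let ψ : U →ₗ[K] K :=
      { toFun := fun v => h v (b j)
        map_add' := fun v w => hadd v w (b j)
        map_smul' := fun a v => hsmul a v (b j) }
    have h2 : (∑ i, g i * h (b i) (b j)) = g j := by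
      rw [Finset.sum_congr rfl (fun i _ => by rw [hb i j])]
      simp
    have h3 : ψ (∑ i, g i • b i) = ∑ i, g i * h (b i) (b j) := by
      rw [map_sum]
      exact Finset.sum_congr rfl fun i _ => by rw [map_smul]; rfl
    have h4 : g j = ψ (∑ i, g i • b i) := by rw [h3, h2]
    rw [h4, hg, map_zero]
  rcases Nat.eq_zero_or_pos (finrank K U) with h0 | hpos
  · haveI : Subsingleton U := by
      rw [← Module.finrank_zero_iff (R := K)]; exact h0
    haveI : IsEmpty (Fin (finrank K U)) := by rw [h0]; exact Fin.isEmpty'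
    exact ⟨Basis.empty U, fun i j => (IsEmpty.false i).elim⟩
  · haveI : Nonempty (Fin (finrank K U)) := Fin.pos_iff_nonempty.mp hpos
    refine ⟨basisOfLinearIndependentOfCardEqFinrank li (by simp), fun i j => ?_⟩
    rw [coe_basisOfLinearIndependentOfCardEqFinrank]
    exact hb i j
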